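/- arXiv:2404.05177 — 5 statements merged into one kernel-verified Lean document; each statement's English description precedes it below -/
import Mathlib

section
/- (Graeffe halving step) Let P, Q ∈ A[[x]] with Q(0) invertible, and let N ≥ 0. Define V by V(x^2) = Q(x)Q(-x) and let U(x) = P(x)Q(-x) with even/odd parts U_e, U_o (i.e., U(x) = U_e(x^2) + x U_o(x^2)). Then [x^N](P(x)/Q(x)) equals [x^{N/2}](U_e(x)/V(x)) if N is even, and [x^{(N-1)/2}](U_o(x)/V(x)) if N is odd. -/
/-- Substitution `x ↦ x²` on formal power series, defined coefficientwise. -/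
noncomputable def sqSubst {R : Type*} [CommRing R] (W : PowerSeries R) : PowerSeries R :=
  PowerSeries.mk fun n => if n % 2 = 0 then PowerSeries.coeff (n / 2) W else 0

/-- Even part: `U_e(x) = Σ_i ([x^{2i}]U) x^i`. -/
noncomputable def evenPart {R : Type*} [CommRing R] (U : PowerSeries R) : PowerSeries R :=
  PowerSeries.mk fun n => PowerSeries.coeff (2 * n) U

/-- Odd part: `U_o(x) = Σ_i ([x^{2i+1}]U) x^i`. -/
noncomputable def oddPart {R : Type*} [CommRing R] (U : PowerSeries R) : PowerSeries R :=
  PowerSeries.mk fun n => PowerSeries.coeff (2 * n + 1) U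

open PowerSeries Finset in
lemma coeff_mul_sqSubst_even {R : Type*} [CommRing R] (U W : PowerSeries R) (m : ℕ) :
    PowerSeries.coeff (2 * m) (U * sqSubst W) =
      PowerSeries.coeff m (evenPart U * W) := by
  rw [coeff_mul, coeff_mul]
  have h1 : ∀ p ∈ Finset.HasAntidiagonal.antidiagonal (2 * m),
      coeff p.1 U * coeff p.2 (sqSubst W)
        = if p.2 % 2 = 0 then coeff p.1 U * coeff (p.2 / 2) W else 0 := by
    intro p _
    simp only [sqSubst, coeff_mk]
    split <;> simp
  rw [Finset.sum_congr rfl h1, ← Finset.sum_filter]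
  refine (Finset.sum_nbij' (i := fun p => (p.1 / 2, p.2 / 2))
    (j := fun p => (2 * p.1, 2 * p.2)) ?_ ?_ ?_ ?_ ?_).symm.symm
  · intro p hp
    simp only [Finset.mem_filter, Finset.HasAntidiagonal.mem_antidiagonal] at hp ⊢
    omega
  · intro p hp
    simp only [Finset.mem_filter, Finset.HasAntidiagonal.mem_antidiagonal] at hp ⊢
    omega
  · intro p hp
    simp only [Finset.mem_filter, Finset.HasAntidiagonal.mem_antidiagonal] at hp
    have : p.1 % 2 = 0 := by omega
    ext <;> simp <;> omega
  · intro p hp; ext <;> simp <;> omega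
  · intro p hp
    simp only [Finset.mem_filter, Finset.HasAntidiagonal.mem_antidiagonal] at hp
    have h2 : 2 * (p.1 / 2) = p.1 := by omega
    simp [evenPart, h2]

open PowerSeries Finset in
lemma coeff_mul_sqSubst_odd {R : Type*} [CommRing R] (U W : PowerSeries R) (m : ℕ) :
    PowerSeries.coeff (2 * m + 1) (U * sqSubst W) =
      PowerSeries.coeff m (oddPart U * W) := by
  rw [coeff_mul, coeff_mul]
  have h1 : ∀ p ∈ Finset.HasAntidiagonal.antidiagonal (2 * m + 1),
      coeff p.1 U * coeff p.2 (sqSubst W)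
        = if p.2 % 2 = 0 then coeff p.1 U * coeff (p.2 / 2) W else 0 := by
    intro p _
    simp only [sqSubst, coeff_mk]
    split <;> simp
  rw [Finset.sum_congr rfl h1, ← Finset.sum_filter]
  refine (Finset.sum_nbij' (i := fun p => (p.1 / 2, p.2 / 2))
    (j := fun p => (2 * p.1 + 1, 2 * p.2)) ?_ ?_ ?_ ?_ ?_).symm.symm
  · intro p hp
    simp only [Finset.mem_filter, Finset.HasAntidiagonal.mem_antidiagonal] at hp ⊢
    omega
  · intro p hp
    simp only [Finset.mem_filter, Finset.HasAntidiagonal.mem_antidiagonal] at hp ⊢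
    omega
  · intro p hp
    simp only [Finset.mem_filter, Finset.HasAntidiagonal.mem_antidiagonal] at hp
    ext <;> simp <;> omega
  · intro p hp; ext <;> simp <;> omega
  · intro p hp
    simp only [Finset.mem_filter, Finset.HasAntidiagonal.mem_antidiagonal] at hp
    have h2 : 2 * (p.1 / 2) + 1 = p.1 := by omega
    simp [oddPart, h2]

open PowerSeries in
lemma evenPart_sqSubst {R : Type*} [CommRing R] (W : PowerSeries R) :
    evenPart (sqSubst W) = W := by
  ext n
  simp [evenPart, sqSubst, Nat.mul_div_cancel_left]

open PowerSeries in
lemma sqSubst_mul {R : Type*} [CommRing R] (V W : PowerSeries R) :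
    sqSubst (V * W) = sqSubst V * sqSubst W := by
  ext n
  rcases Nat.even_or_odd n with ⟨m, hm⟩ | ⟨m, hm⟩
  · subst hm
    rw [show m + m = 2 * m by ring, coeff_mul_sqSubst_even, evenPart_sqSubst]
    simp [sqSubst, Nat.mul_div_cancel_left]
  · subst hm
    rw [coeff_mul_sqSubst_odd]
    have ho : oddPart (sqSubst V) = 0 := by
      ext k
      simp only [oddPart, sqSubst, coeff_mk]
      rw [if_neg (by omega)]
      simp
    rw [ho, zero_mul]
    simp only [sqSubst, coeff_mk]
    rw [if_neg (by omega)]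
    simp

/-- Graeffe halving step: with `V(x²) = Q(x)Q(-x)`, `U = P(x)Q(-x)`,
`[x^N](P/Q)` equals `[x^{N/2}](U_e/V)` if `N` is even, `[x^{(N-1)/2}](U_o/V)` if odd. -/
theorem graeffe_halving_step
    {A : Type*} [CommRing A] (P Q : PowerSeries A)
    (hQ0 : IsUnit (PowerSeries.constantCoeff Q)) (N : ℕ)
    (Qinv : PowerSeries A) (hQinv : Q * Qinv = 1)
    (V : PowerSeries A) (hV : sqSubst V = Q * PowerSeries.rescale (-1) Q)
    (Vinv : PowerSeries A) (hVinv : V * Vinv = 1) :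
    PowerSeries.coeff N (P * Qinv) =
      if N % 2 = 0 then
        PowerSeries.coeff (N / 2) (evenPart (P * PowerSeries.rescale (-1) Q) * Vinv)
      else
        PowerSeries.coeff ((N - 1) / 2) (oddPart (P * PowerSeries.rescale (-1) Q) * Vinv) := by
  have hs1 : sqSubst (1 : PowerSeries A) = 1 := by
    ext n
    simp only [sqSubst, PowerSeries.coeff_mk, PowerSeries.coeff_one]
    rcases Nat.eq_zero_or_pos n with h | h
    · subst h; simp
    · split_ifs <;> first | rfl | omega
  have hQinv' : Qinv = PowerSeries.rescale (-1) Q * sqSubst Vinv := by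
    have h2 : Q * (PowerSeries.rescale (-1) Q * sqSubst Vinv) = 1 := by
      rw [← mul_assoc, ← hV, ← sqSubst_mul, hVinv, hs1]
    calc Qinv = Qinv * (Q * (PowerSeries.rescale (-1) Q * sqSubst Vinv)) := by rw [h2, mul_one]
    _ = (Q * Qinv) * (PowerSeries.rescale (-1) Q * sqSubst Vinv) := by ring
    _ = _ := by rw [hQinv, one_mul]
  rw [hQinv', ← mul_assoc]
  split_ifs with h
  · conv_lhs => rw [show N = 2 * (N / 2) from by omega]
    exact coeff_mul_sqSubst_even _ _ _
  · conv_lhs => rw [show N = 2 * ((N - 1) / 2) + 1 from by omega]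
    exact coeff_mul_sqSubst_odd _ _ _
end

section
/- Iterating the Graeffe halving step ⌈log₂(N+1)⌉ times reduces coefficient extraction [x^N](P(x)/Q(x)) to the evaluation P'(0)/Q'(0) for some power series P', Q' with Q'(0) a unit; in particular, [x^0](P(x)/Q(x)) = P(0)·Q(0)⁻¹. -/
open PowerSeries Finset


/-- One Graeffe halving step on state `(P, Q, N)`:
`Q ← even part of Q(x)Q(-x)` (i.e. the `V` with `V(x²) = Q(x)Q(-x)`),
`P ← ` even or odd part of `P(x)Q(-x)` according to the parity of `N`, `N ← ⌊N/2⌋`. -/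
noncomputable def graeffeStep {A : Type*} [CommRing A]
    (s : PowerSeries A × PowerSeries A × ℕ) : PowerSeries A × PowerSeries A × ℕ :=
  let U := s.1 * PowerSeries.rescale (-1) s.2.1
  (if s.2.2 % 2 = 0 then evenPart U else oddPart U,
   evenPart (s.2.1 * PowerSeries.rescale (-1) s.2.1),
   s.2.2 / 2)


namespace GraeffeAux

variable {A : Type*} [CommRing A]

/-- Substitute `x ↦ x²`. -/
noncomputable def expand2 (U : PowerSeries A) : PowerSeries A :=
  PowerSeries.mk fun n => if n % 2 = 0 then PowerSeries.coeff (n / 2) U else 0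

lemma coeff_expand2_even (U : PowerSeries A) (k : ℕ) :
    PowerSeries.coeff (2 * k) (expand2 U) = PowerSeries.coeff k U := by
  have h1 : (2 * k) % 2 = 0 := by omega
  have h2 : (2 * k) / 2 = k := by omega
  simp [expand2, h1, h2]

lemma coeff_expand2_odd (U : PowerSeries A) (k : ℕ) :
    PowerSeries.coeff (2 * k + 1) (expand2 U) = 0 := by
  have h1 : ¬ ((2 * k + 1) % 2 = 0) := by omega
  simp [expand2, h1]

lemma coeff_mul_expand2 (U V : PowerSeries A) (m par : ℕ) (hpar : par ≤ 1) :
    PowerSeries.coeff (2 * m + par) (U * expand2 V) =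
      PowerSeries.coeff m
        ((PowerSeries.mk fun k => PowerSeries.coeff (2 * k + par) U) * V) := by
  rw [PowerSeries.coeff_mul, PowerSeries.coeff_mul]
  simp only [coeff_mk]
  set f : ℕ × ℕ → A := fun x => PowerSeries.coeff x.1 U * PowerSeries.coeff x.2 (expand2 V)
    with hf
  have key : ∑ x ∈ Finset.HasAntidiagonal.antidiagonal (2 * m + par), f x
      = ∑ x ∈ (Finset.HasAntidiagonal.antidiagonal m).image (fun ab : ℕ × ℕ => (2 * ab.1 + par, 2 * ab.2)), f x := by
    refine (Finset.sum_subset ?_ ?_).symm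
    · intro x hx
      simp only [Finset.mem_image, Finset.HasAntidiagonal.mem_antidiagonal] at hx
      obtain ⟨⟨a, b⟩, hab, rfl⟩ := hx
      rw [Finset.HasAntidiagonal.mem_antidiagonal]
      simp only
      omega
    · intro x hx hnx
      rw [Finset.HasAntidiagonal.mem_antidiagonal] at hx
      rcases Nat.even_or_odd x.2 with ⟨b, hb⟩ | ⟨b, hb⟩
      · exfalso
        apply hnx
        apply Finset.mem_image.mpr
        refine ⟨(m - b, b), Finset.HasAntidiagonal.mem_antidiagonal.mpr (by omega), ?_⟩
        have h1 : 2 * (m - b) + par = x.1 := by omega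
        have h2 : 2 * b = x.2 := by omega
        exact Prod.ext h1 h2
      · have hx2 : x.2 = 2 * b + 1 := by omega
        rw [hf]
        simp only
        rw [hx2, coeff_expand2_odd, mul_zero]
  rw [key, Finset.sum_image]
  · apply Finset.sum_congr rfl
    intro x hx
    rw [hf]
    simp only
    rw [coeff_expand2_even]
  · intro x _ y _ h
    simp only [Prod.mk.injEq] at h
    exact Prod.ext (by omega) (by omega)

lemma coeff_mul_expand2_even (U V : PowerSeries A) (m : ℕ) :
    PowerSeries.coeff (2 * m) (U * expand2 V) =
      PowerSeries.coeff m ((PowerSeries.mk fun k => PowerSeries.coeff (2 * k) U) * V) := by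
  have := coeff_mul_expand2 U V m 0 (by omega)
  simpa using this

lemma expand2_mul (a b : PowerSeries A) : expand2 (a * b) = expand2 a * expand2 b := by
  ext n
  rcases Nat.even_or_odd n with ⟨m, hm⟩ | ⟨m, hm⟩
  · have hn : n = 2 * m := by omega
    subst hn
    rw [coeff_expand2_even, coeff_mul_expand2_even]
    congr 2
    ext k
    rw [coeff_mk, coeff_expand2_even]
  · have hn : n = 2 * m + 1 := by omega
    subst hn
    rw [coeff_expand2_odd]
    rw [coeff_mul_expand2 (expand2 a) b m 1 le_rfl]
    have hz : (PowerSeries.mk fun k => PowerSeries.coeff (2 * k + 1) (expand2 a))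
        = (0 : PowerSeries A) := by
      ext k
      rw [coeff_mk, coeff_expand2_odd]
      simp
    rw [hz, zero_mul, map_zero]

lemma expand2_one : expand2 (1 : PowerSeries A) = 1 := by
  ext n
  simp only [expand2, coeff_mk, PowerSeries.coeff_one]
  split_ifs with h1 h2 h3 <;> first | rfl | omega

lemma map_ringInverse {B : Type*} [CommRing B] (f : A →+* B) (a : A) (ha : IsUnit a) :
    f (Ring.inverse a) = Ring.inverse (f a) := by
  have h1 : f a * f (Ring.inverse a) = 1 := by
    rw [← map_mul, Ring.mul_inverse_cancel a ha, map_one]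
  calc f (Ring.inverse a) = Ring.inverse (f a) * (f a * f (Ring.inverse a)) := by
        rw [Ring.inverse_mul_cancel_left _ _ (ha.map f)]
    _ = Ring.inverse (f a) := by rw [h1, mul_one]

lemma inverse_unique {a b : A} (ha : IsUnit a) (h : a * b = 1) : Ring.inverse a = b := by
  calc Ring.inverse a = Ring.inverse a * (a * b) := by rw [h, mul_one]
    _ = b := Ring.inverse_mul_cancel_left a b ha

/-- Odd coefficients of `Q(x)·Q(-x)` vanish. -/
lemma coeff_odd_QR (Q : PowerSeries A) (m : ℕ) :
    PowerSeries.coeff (2 * m + 1) (Q * PowerSeries.rescale (-1) Q) = 0 := by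
  rw [PowerSeries.coeff_mul]
  refine Finset.sum_involution (fun x _ => Prod.swap x) ?_ ?_ ?_ ?_
  · intro x hx
    rw [Finset.HasAntidiagonal.mem_antidiagonal] at hx
    simp only [Prod.swap, PowerSeries.coeff_rescale]
    have hpar : (-1 : A) ^ x.2 = -(-1 : A) ^ x.1 := by
      rcases Nat.even_or_odd x.1 with h1 | h1
      · have h2 : Odd x.2 := by
          rcases h1 with ⟨c, hc⟩; exact ⟨m - c, by omega⟩
        rw [h2.neg_one_pow, h1.neg_one_pow]
      · have h2 : Even x.2 := by
          rcases h1 with ⟨c, hc⟩; exact ⟨m - c, by omega⟩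
        rw [h2.neg_one_pow, h1.neg_one_pow, neg_neg]
    rw [hpar]
    ring
  · intro x hx h
    rw [Finset.HasAntidiagonal.mem_antidiagonal] at hx
    intro hc
    have h1 : x.2 = x.1 := congrArg Prod.fst hc
    omega
  · intro x hx
    rw [Finset.HasAntidiagonal.mem_antidiagonal] at hx ⊢
    simp only [Prod.fst_swap, Prod.snd_swap]
    omega
  · intro x hx
    rfl

/-- `Q(x)Q(-x)` equals the expansion of its even part. -/
lemma QR_eq_expand2 (Q : PowerSeries A) :
    Q * PowerSeries.rescale (-1) Q = expand2 (evenPart (Q * PowerSeries.rescale (-1) Q)) := by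
  ext n
  rcases Nat.even_or_odd n with ⟨m, hm⟩ | ⟨m, hm⟩
  · have hn : n = 2 * m := by omega
    subst hn
    rw [coeff_expand2_even, evenPart, coeff_mk]
  · have hn : n = 2 * m + 1 := by omega
    subst hn
    rw [coeff_expand2_odd, coeff_odd_QR]

end GraeffeAux

namespace GraeffeAux

variable {A : Type*} [CommRing A]

lemma constCoeff_rescale_neg_one (Q : PowerSeries A) :
    PowerSeries.constantCoeff (PowerSeries.rescale (-1) Q) =
      PowerSeries.constantCoeff Q := by
  rw [← PowerSeries.coeff_zero_eq_constantCoeff_apply, ← PowerSeries.coeff_zero_eq_constantCoeff_apply,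
    PowerSeries.coeff_rescale]
  simp

lemma constCoeff_evenPart_QR (Q : PowerSeries A) :
    PowerSeries.constantCoeff (evenPart (Q * PowerSeries.rescale (-1) Q)) =
      PowerSeries.constantCoeff Q * PowerSeries.constantCoeff Q := by
  rw [← PowerSeries.coeff_zero_eq_constantCoeff_apply]
  rw [show (PowerSeries.coeff 0) (evenPart (Q * PowerSeries.rescale (-1) Q)) =
      (PowerSeries.coeff (2 * 0)) (Q * PowerSeries.rescale (-1) Q) from coeff_mk _ _]
  norm_num
  rw [constCoeff_rescale_neg_one]

lemma step_coeff (P Q : PowerSeries A) (hQ : IsUnit (PowerSeries.constantCoeff Q)) (N : ℕ) :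
    PowerSeries.coeff N (P * Ring.inverse Q) =
      PowerSeries.coeff (N / 2)
        ((if N % 2 = 0 then evenPart (P * PowerSeries.rescale (-1) Q)
            else oddPart (P * PowerSeries.rescale (-1) Q)) *
          Ring.inverse (evenPart (Q * PowerSeries.rescale (-1) Q))) := by
  set R := PowerSeries.rescale (-1) Q with hR
  set W := Q * R with hWdef
  set Q' := evenPart W with hQ'def
  have hcR : PowerSeries.constantCoeff R = PowerSeries.constantCoeff Q :=
    constCoeff_rescale_neg_one Q
  have hRunit : IsUnit R := PowerSeries.isUnit_iff_constantCoeff.mpr (hcR ▸ hQ)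
  have hQunit : IsUnit Q := PowerSeries.isUnit_iff_constantCoeff.mpr hQ
  have hQ'unit : IsUnit Q' :=
    PowerSeries.isUnit_iff_constantCoeff.mpr
      (by rw [hQ'def, hWdef, hR, constCoeff_evenPart_QR]; exact hQ.mul hQ)
  -- rewrite P/Q as (P·R)/W
  have hPQ : P * Ring.inverse Q = (P * R) * Ring.inverse W := by
    rw [hWdef, Ring.mul_inverse_rev]
    calc P * Ring.inverse Q
        = P * Ring.inverse Q * (R * Ring.inverse R) := by
          rw [Ring.mul_inverse_cancel R hRunit, mul_one]
      _ = P * R * (Ring.inverse R * Ring.inverse Q) := by ring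
  -- the inverse of W is the expansion of the inverse of Q'
  have hinvW : Ring.inverse W = expand2 (Ring.inverse Q') := by
    have hWunit : IsUnit W := hQunit.mul hRunit
    refine inverse_unique hWunit ?_
    conv_lhs => rw [hWdef, hR, QR_eq_expand2 Q, ← hR, ← hWdef, ← hQ'def]
    rw [← expand2_mul, Ring.mul_inverse_cancel _ hQ'unit, expand2_one]
  rw [hPQ, hinvW]
  rcases Nat.even_or_odd N with ⟨m, hm⟩ | ⟨m, hm⟩
  · have hN : N = 2 * m := by omega
    rw [hN, if_pos (show 2 * m % 2 = 0 by omega), show 2 * m / 2 = m from by omega,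
      coeff_mul_expand2_even]
    rfl
  · have hN : N = 2 * m + 1 := by omega
    rw [hN, if_neg (show ¬ (2 * m + 1) % 2 = 0 by omega),
      show (2 * m + 1) / 2 = m from by omega, coeff_mul_expand2 _ _ m 1 le_rfl]
    rfl

lemma iterate_key (k : ℕ) (P Q : PowerSeries A) (N : ℕ)
    (hQ : IsUnit (PowerSeries.constantCoeff Q)) :
    (graeffeStep^[k] (P, Q, N)).2.2 = N / 2 ^ k ∧
    IsUnit (PowerSeries.constantCoeff (graeffeStep^[k] (P, Q, N)).2.1) ∧
    PowerSeries.coeff N (P * Ring.inverse Q) =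
      PowerSeries.coeff (graeffeStep^[k] (P, Q, N)).2.2
        ((graeffeStep^[k] (P, Q, N)).1 * Ring.inverse (graeffeStep^[k] (P, Q, N)).2.1) := by
  induction k generalizing P Q N with
  | zero =>
    simp only [Function.iterate_zero_apply, pow_zero, Nat.div_one]
    exact ⟨trivial, hQ, trivial⟩
  | succ k ih =>
    rw [Function.iterate_succ_apply]
    have hs : graeffeStep (P, Q, N) =
        ((if N % 2 = 0 then evenPart (P * PowerSeries.rescale (-1) Q)
            else oddPart (P * PowerSeries.rescale (-1) Q)),
          evenPart (Q * PowerSeries.rescale (-1) Q), N / 2) := rfl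
    rw [hs]
    have hQ1 : IsUnit (PowerSeries.constantCoeff (evenPart (Q * PowerSeries.rescale (-1) Q))) := by
      rw [constCoeff_evenPart_QR]; exact hQ.mul hQ
    obtain ⟨h1, h2, h3⟩ := ih _ _ (N / 2) hQ1
    refine ⟨?_, h2, ?_⟩
    · rw [h1, Nat.div_div_eq_div_mul, pow_succ']
    · rw [step_coeff P Q hQ N, h3]

end GraeffeAux

/-- Iterating the Graeffe halving step `⌈log₂(N+1)⌉` times reduces
`[x^N](P/Q)` to an evaluation `P'(0)·Q'(0)⁻¹` at `x = 0`, for power series `P', Q'`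
with `Q'(0)` a unit; in particular `[x^0](P/Q) = P(0)·Q(0)⁻¹`. -/
theorem graeffe_iterate_reduces_to_constant
    {A : Type*} [CommRing A] (P Q : PowerSeries A)
    (hQ0 : IsUnit (PowerSeries.constantCoeff Q)) (N : ℕ) :
    (let s := graeffeStep^[Nat.clog 2 (N + 1)] (P, Q, N)
     s.2.2 = 0 ∧ IsUnit (PowerSeries.constantCoeff s.2.1) ∧
       PowerSeries.coeff N (P * Ring.inverse Q) =
         PowerSeries.constantCoeff s.1 *
           Ring.inverse (PowerSeries.constantCoeff s.2.1)) ∧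
      PowerSeries.coeff 0 (P * Ring.inverse Q) =
        PowerSeries.constantCoeff P * Ring.inverse (PowerSeries.constantCoeff Q) := by
  have hzero : ∀ (P' Q' : PowerSeries A), IsUnit (PowerSeries.constantCoeff Q') →
      PowerSeries.coeff 0 (P' * Ring.inverse Q') =
        PowerSeries.constantCoeff P' * Ring.inverse (PowerSeries.constantCoeff Q') := by
    intro P' Q' h
    rw [PowerSeries.coeff_zero_eq_constantCoeff_apply, map_mul,
      GraeffeAux.map_ringInverse (PowerSeries.constantCoeff) Q'
        (PowerSeries.isUnit_iff_constantCoeff.mpr h)]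
  obtain ⟨h1, h2, h3⟩ := GraeffeAux.iterate_key (Nat.clog 2 (N + 1)) P Q N hQ0
  have hN0 : (graeffeStep^[Nat.clog 2 (N + 1)] (P, Q, N)).2.2 = 0 := by
    rw [h1]
    exact Nat.div_eq_of_lt (Nat.lt_of_succ_le (Nat.le_pow_clog one_lt_two (N + 1)))
  refine ⟨⟨hN0, h2, ?_⟩, hzero P Q hQ0⟩
  rw [h3, hN0, hzero _ _ h2]
end

section
/- (Power projection as rational coefficient extraction) Let g ∈ A[x] with deg g < n, let w_0,…,w_{n-1} ∈ A define the linear form w(Σ a_j x^j) = Σ_{j<n} w_j a_j, and set w^R(x) = Σ_{j=0}^{n-1} w_{n-1-j} x^j. Then for every i ≥ 0, w(g(x)^i mod x^n) = [x^{n-1}](w^R(x) · g(x)^i). Hence Σ_{i=0}^{m-1} w(g(x)^i mod x^n) y^i = ([x^{n-1}] (w^R(x)/(1 - y g(x)))) mod y^m. -/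
/-- Power projection as rational coefficient extraction:
for `g` of degree `< n` and the linear form `w`, with `w^R(x) = Σ_{j<n} w_{n-1-j} x^j`,
`w(g^i mod x^n) = [x^{n-1}](w^R · g^i)` for all `i`; hence for `i < m` the coefficient
of `y^i` in `[x^{n-1}](w^R/(1 - y g))` is `w(g^i mod x^n)`. -/
theorem power_projection_as_coeff
    {A : Type*} [CommRing A] (n m : ℕ) (hn : 1 ≤ n)
    (g : Polynomial A) (hg : g.natDegree < n) (w : ℕ → A) :
    (∀ i : ℕ,
        (∑ j ∈ Finset.range n,
            w j * (PowerSeries.trunc n ((g : PowerSeries A) ^ i)).coeff j) =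
          ((∑ j ∈ Finset.range n, Polynomial.C (w (n - 1 - j)) * Polynomial.X ^ j) *
              g ^ i).coeff (n - 1)) ∧
      ∀ i < m,
        ((PowerSeries.coeff (R := Polynomial A) i
              (PowerSeries.C (R := Polynomial A)
                  (∑ j ∈ Finset.range n, Polynomial.C (w (n - 1 - j)) * Polynomial.X ^ j) *
                Ring.inverse
                  (1 - PowerSeries.X * PowerSeries.C (R := Polynomial A) g))).coeff (n - 1)) =
          ∑ j ∈ Finset.range n,
            w j * (PowerSeries.trunc n ((g : PowerSeries A) ^ i)).coeff j := by
  have key : ∀ i : ℕ,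
      (∑ j ∈ Finset.range n,
          w j * (PowerSeries.trunc n ((g : PowerSeries A) ^ i)).coeff j) =
        ((∑ j ∈ Finset.range n, Polynomial.C (w (n - 1 - j)) * Polynomial.X ^ j) *
            g ^ i).coeff (n - 1) := by
    intro i
    have lhs : (∑ j ∈ Finset.range n,
        w j * (PowerSeries.trunc n ((g : PowerSeries A) ^ i)).coeff j) =
        ∑ j ∈ Finset.range n, w j * (g ^ i).coeff j := by
      refine Finset.sum_congr rfl fun j hj => ?_
      rw [Finset.mem_range] at hj
      rw [PowerSeries.coeff_trunc, if_pos hj, ← Polynomial.coe_pow,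
        Polynomial.coeff_coe]
    rw [lhs, Finset.sum_mul, Polynomial.finset_sum_coeff]
    rw [← Finset.sum_range_reflect (fun j => w j * (g ^ i).coeff j) n]
    refine Finset.sum_congr rfl fun j hj => ?_
    rw [Finset.mem_range] at hj
    rw [mul_assoc, Polynomial.coeff_C_mul, Polynomial.coeff_X_pow_mul']
    rw [if_pos (by omega)]
  refine ⟨key, fun i hi => ?_⟩
  -- compute the inverse as the geometric series
  set S : PowerSeries (Polynomial A) := PowerSeries.mk (fun k => g ^ k) with hS
  have hmul : (1 - PowerSeries.X * PowerSeries.C (R := Polynomial A) g) * S = 1 := by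
    ext k
    cases k with
    | zero => simp [hS]
    | succ k =>
      rw [sub_mul, one_mul, map_sub, mul_assoc, PowerSeries.coeff_succ_X_mul,
        PowerSeries.coeff_C_mul, hS, PowerSeries.coeff_mk, PowerSeries.coeff_mk,
        PowerSeries.coeff_one, if_neg (Nat.succ_ne_zero k), pow_succ]
      ring
  have hinv : Ring.inverse (1 - PowerSeries.X * PowerSeries.C (R := Polynomial A) g) = S := by
    have hu : IsUnit (1 - PowerSeries.X * PowerSeries.C (R := Polynomial A) g) :=
      IsUnit.of_mul_eq_one _ hmul
    calc Ring.inverse (1 - PowerSeries.X * PowerSeries.C (R := Polynomial A) g)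
        = Ring.inverse _ * ((1 - PowerSeries.X * PowerSeries.C (R := Polynomial A) g) * S) := by
          rw [hmul, mul_one]
      _ = (Ring.inverse _ * (1 - PowerSeries.X * PowerSeries.C (R := Polynomial A) g)) * S := by
          ring
      _ = S := by rw [Ring.inverse_mul_cancel _ hu, one_mul]
  rw [hinv, hS, PowerSeries.coeff_C_mul, PowerSeries.coeff_mk, key i]
end

section
/- (Composition as coefficient extraction) Let f ∈ A[y] with deg f < m and g ∈ A[x]. Set P(y) = y^{m-1} f(1/y) (the degree-(m-1) reversal of f). Then f(g(x)) mod x^n = ([y^{m-1}] (P(y)/(1 - y g(x)))) mod x^n, where the quotient is taken in A[x][[y]]. -/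
/-- Composition as coefficient extraction: for `f` of degree `< m`,
`g ∈ A[x]`, and `P(y) = Σ_{i<m} ([y^i]f) y^{m-1-i}` the degree-`(m-1)` reversal of `f`,
we have `f(g(x)) mod x^n = ([y^{m-1}](P(y)/(1 - y g(x)))) mod x^n` in `A[x]⟦y⟧`. -/
theorem composition_as_coeff
    {A : Type*} [CommRing A] (n m : ℕ) (hm : 1 ≤ m)
    (f g : Polynomial A) (hf : f.natDegree < m) :
    ∀ k < n,
      (f.comp g).coeff k =
        ((PowerSeries.coeff (R := Polynomial A) (m - 1)
              ((∑ i ∈ Finset.range m,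
                  PowerSeries.C (R := Polynomial A) (Polynomial.C (f.coeff i)) *
                    PowerSeries.X ^ (m - 1 - i)) *
                Ring.inverse
                  (1 - PowerSeries.X * PowerSeries.C (R := Polynomial A) g))).coeff k) := by
  intro k hk
  set S : PowerSeries (Polynomial A) := PowerSeries.mk (fun j => g ^ j) with hS
  have hinv : (1 - PowerSeries.X * PowerSeries.C (R := Polynomial A) g) * S = 1 := by
    ext j
    rw [sub_mul, one_mul, map_sub]
    cases j with
    | zero => simp [hS]
    | succ j =>
      rw [mul_comm PowerSeries.X, mul_assoc]
      simp [hS, PowerSeries.coeff_succ_X_mul, pow_succ, mul_comm]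
  have hu : Ring.inverse (1 - PowerSeries.X * PowerSeries.C (R := Polynomial A) g) = S := by
    have := Ring.inverse_unit (⟨_, S, hinv, by rw [mul_comm] at hinv; exact hinv⟩ :
      (PowerSeries (Polynomial A))ˣ)
    exact this
  rw [hu, Finset.sum_mul, map_sum]
  have hsum : ∀ i ∈ Finset.range m,
      (PowerSeries.coeff (R := Polynomial A) (m - 1))
        (PowerSeries.C (R := Polynomial A) (Polynomial.C (f.coeff i)) *
          PowerSeries.X ^ (m - 1 - i) * S) = Polynomial.C (f.coeff i) * g ^ i := by
    intro i hi
    have hi' : i ≤ m - 1 := Nat.le_sub_one_of_lt (Finset.mem_range.mp hi)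
    set e := m - 1 - i with he
    rw [mul_assoc, PowerSeries.coeff_C_mul,
      show m - 1 = i + e from (Nat.add_sub_cancel' hi').symm,
      PowerSeries.coeff_X_pow_mul]
    simp [hS]
  rw [Finset.sum_congr rfl hsum]
  have : f.comp g = ∑ i ∈ Finset.range m, Polynomial.C (f.coeff i) * g ^ i := by
    rw [Polynomial.comp_eq_sum_left]
    exact f.sum_over_range' (fun n => by simp) m hf
  rw [this]
end

section
/- If a function M: ℕ → ℝ≥0 is nondecreasing and superadditive (M(a) + M(b) ≤ M(a+b)), then Σ_{i=0}^{⌊log₂ n⌋} M(⌈n/2^i⌉) ≤ C·M(n) for a universal constant C (e.g., C = 4) and all n ≥ 1. -/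
/-- Brent–Kung geometric-series lemma: if `M : ℕ → ℝ≥0` is nondecreasing
and superadditive, then `Σ_{i=0}^{⌊log₂ n⌋} M(⌈n/2^i⌉) ≤ C·M(n)` for a universal
constant `C` and all `n ≥ 1`. -/
theorem geometric_series_lemma :
    ∃ C : NNReal, ∀ M : ℕ → NNReal,
      Monotone M →
      (∀ a b : ℕ, M a + M b ≤ M (a + b)) →
      ∀ n : ℕ, 1 ≤ n →
        (∑ i ∈ Finset.range (Nat.log 2 n + 1), M ((n + 2 ^ i - 1) / 2 ^ i)) ≤ C * M n := by
  refine ⟨4, ?_⟩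
  intro M hmono hsuper n hn
  have hM0 : M 0 = 0 := by
    have h := hsuper 0 0
    simp only [Nat.add_zero] at h
    have : M 0 + M 0 ≤ M 0 + 0 := by simpa using h
    have := le_of_add_le_add_left this
    exact le_antisymm this zero_le
  have hmul : ∀ (k m : ℕ), (k : NNReal) * M m ≤ M (k * m) := by
    intro k m
    induction k with
    | zero => simp [hM0]
    | succ k ih =>
      have : ((k + 1 : ℕ) : NNReal) * M m = (k : NNReal) * M m + M m := by
        push_cast; ring
      rw [this]
      calc (k : NNReal) * M m + M m ≤ M (k * m) + M m := by gcongr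
        _ ≤ M (k * m + m) := hsuper _ _
        _ = M ((k + 1) * m) := by ring_nf
  have hterm : ∀ i ∈ Finset.range (Nat.log 2 n + 1),
      M ((n + 2 ^ i - 1) / 2 ^ i) ≤ 2 * (1 / 2 : NNReal) ^ i * M n := by
    intro i hi
    have h2i : 2 ^ i ≤ n := by
      have : i ≤ Nat.log 2 n := by
        exact Nat.lt_succ_iff.mp (Finset.mem_range.mp hi)
      calc 2 ^ i ≤ 2 ^ Nat.log 2 n := Nat.pow_le_pow_right (by norm_num) this
        _ ≤ n := Nat.pow_log_le_self 2 (by omega)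
    cases i with
    | zero =>
      simp only [pow_zero, Nat.add_sub_cancel, Nat.div_one, one_mul, mul_one]
      exact le_mul_of_one_le_left zero_le one_le_two
    | succ j =>
      set q := (n + 2 ^ (j + 1) - 1) / 2 ^ (j + 1) with hq
      have hdiv : q * 2 ^ (j + 1) ≤ n + 2 ^ (j + 1) - 1 := Nat.div_mul_le_self _ _
      have hkey : 2 ^ j * q ≤ n := by
        have hp : 2 * (2 ^ j * q) ≤ n + 2 * 2 ^ j - 1 := by
          have : q * (2 * 2 ^ j) ≤ n + 2 * 2 ^ j - 1 := by
            simpa [pow_succ, mul_comm] using hdiv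
          calc 2 * (2 ^ j * q) = q * (2 * 2 ^ j) := by ring
            _ ≤ n + 2 * 2 ^ j - 1 := this
        have ha : 2 * 2 ^ j ≤ n := by simpa [pow_succ, mul_comm] using h2i
        omega
      have h1 : (2 ^ j : NNReal) * M q ≤ M n := by
        calc (2 ^ j : NNReal) * M q = ((2 ^ j : ℕ) : NNReal) * M q := by push_cast; ring
          _ ≤ M (2 ^ j * q) := hmul _ _
          _ ≤ M n := hmono hkey
      have h2 : (2 : NNReal) ^ j ≠ 0 := by positivity
      calc M q = ((2 : NNReal) ^ j)⁻¹ * ((2 : NNReal) ^ j * M q) := by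
            rw [← mul_assoc, inv_mul_cancel₀ h2, one_mul]
        _ ≤ ((2 : NNReal) ^ j)⁻¹ * M n := by gcongr
        _ = 2 * (1 / 2 : NNReal) ^ (j + 1) * M n := by
            rw [one_div, inv_pow, pow_succ]
            field_simp
  calc (∑ i ∈ Finset.range (Nat.log 2 n + 1), M ((n + 2 ^ i - 1) / 2 ^ i))
      ≤ ∑ i ∈ Finset.range (Nat.log 2 n + 1), 2 * (1 / 2 : NNReal) ^ i * M n :=
        Finset.sum_le_sum hterm
    _ = 2 * (∑ i ∈ Finset.range (Nat.log 2 n + 1), (1 / 2 : NNReal) ^ i) * M n := by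
        rw [Finset.mul_sum, Finset.sum_mul]
    _ ≤ 2 * 2 * M n := by
        gcongr
        rw [← NNReal.coe_le_coe]
        push_cast
        exact sum_geometric_two_le _
    _ = 4 * M n := by norm_num
end
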